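/- arXiv:2111.12706 — 2 statements merged into one kernel-verified Lean document; each statement's English description precedes it below -/
import Mathlib

section
/- Let X, Y be strings of length n with τ ≥ 1 an integer, and for each level p ∈ [0, ⌈log₂ n⌉] let X_{p,i}, Y_{p,i} be the length-2^p blocks of X and Y and B_p = {i : ED(X_{p,i}, Y_{p,i}) > τ}. Then for every level p, the sum over i ∈ B_p of ED(X_{p,i}, Y_{p,i}) is at most 2τ times the sum of |B_q| over q from ⌈log₂ τ⌉ to p. -/
/-- Cost structure for edit distance (formerly in Mathlib's `Mathlib.Data.List.EditDistance.Defs`). -/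
structure Levenshtein.Cost (α β δ : Type*) where
  delete : α → δ
  insert : β → δ
  substitute : α → β → δ

/-- Unit costs (formerly `Levenshtein.defaultCost` in Mathlib). -/
def Levenshtein.defaultCost {α : Type*} [DecidableEq α] : Levenshtein.Cost α α ℕ where
  delete _ := 1
  insert _ := 1
  substitute a b := if a = b then 0 else 1

/-- Levenshtein distance (formerly in Mathlib), via its defining recursion. -/
def levenshtein {α β δ : Type*} [AddZeroClass δ] [Min δ] (C : Levenshtein.Cost α β δ) :
    List α → List β → δ
  | [], [] => 0
  | [], y :: ys => C.insert y + levenshtein C [] ys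
  | x :: xs, [] => C.delete x + levenshtein C xs []
  | x :: xs, y :: ys =>
      min (C.delete x + levenshtein C xs (y :: ys))
        (min (C.insert y + levenshtein C (x :: xs) ys) (C.substitute x y + levenshtein C xs ys))

/-- The edit distance between two lists (Levenshtein distance with unit costs). -/
def ED {α : Type*} [DecidableEq α] (X Y : List α) : ℕ :=
  levenshtein Levenshtein.defaultCost X Y

/-- The i-th block of length 2^p of a string: X[i·2^p .. min(n,(i+1)·2^p)). -/
def blk {α : Type*} (X : List α) (p i : ℕ) : List α := (X.drop (i * 2 ^ p)).take (2 ^ p)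

/-- The number of blocks at level p: m_p = ⌈n / 2^p⌉. -/
def nblocks (n p : ℕ) : ℕ := (n + 2 ^ p - 1) / 2 ^ p

/-- The set B_p of indices of block pairs with edit distance exceeding τ. -/
def Bset {α : Type*} [DecidableEq α] (X Y : List α) (n τ p : ℕ) : Finset ℕ :=
  (Finset.range (nblocks n p)).filter fun i => τ < ED (blk X p i) (blk Y p i)

section helpers

@[simp] lemma levenshtein_nil_nil {α β δ : Type*} [AddZeroClass δ] [Min δ]
    (C : Levenshtein.Cost α β δ) : levenshtein C [] [] = 0 := by
  rw [levenshtein]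

lemma levenshtein_nil_cons {α β δ : Type*} [AddZeroClass δ] [Min δ]
    (C : Levenshtein.Cost α β δ) (y : β) (ys : List β) :
    levenshtein C [] (y :: ys) = C.insert y + levenshtein C [] ys := by
  rw [levenshtein]

lemma levenshtein_cons_nil {α β δ : Type*} [AddZeroClass δ] [Min δ]
    (C : Levenshtein.Cost α β δ) (x : α) (xs : List α) :
    levenshtein C (x :: xs) [] = C.delete x + levenshtein C xs [] := by
  rw [levenshtein]

lemma levenshtein_cons_cons {α β δ : Type*} [AddZeroClass δ] [Min δ]
    (C : Levenshtein.Cost α β δ) (x : α) (xs : List α) (y : β) (ys : List β) :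
    levenshtein C (x :: xs) (y :: ys) =
      min (C.delete x + levenshtein C xs (y :: ys))
        (min (C.insert y + levenshtein C (x :: xs) ys) (C.substitute x y + levenshtein C xs ys)) := by
  rw [levenshtein]

@[simp] lemma Levenshtein.defaultCost_delete {α : Type*} [DecidableEq α] (a : α) :
    (Levenshtein.defaultCost : Levenshtein.Cost α α ℕ).delete a = 1 := rfl

@[simp] lemma Levenshtein.defaultCost_insert {α : Type*} [DecidableEq α] (a : α) :
    (Levenshtein.defaultCost : Levenshtein.Cost α α ℕ).insert a = 1 := rfl

open Levenshtein
variable {α : Type*} [DecidableEq α]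

lemma ED_nil (Y : List α) : ED [] Y = Y.length := by
  induction Y with
  | nil => simp [ED]
  | cons y ys ih => simp [ED, levenshtein_nil_cons] at *; omega

lemma ED_nil' (X : List α) : ED X [] = X.length := by
  induction X with
  | nil => simp [ED]
  | cons x xs ih => simp [ED, levenshtein_cons_nil] at *; omega

lemma ED_le_max (X Y : List α) : ED X Y ≤ max X.length Y.length := by
  induction X generalizing Y with
  | nil => simp [ED_nil]
  | cons x xs ih =>
    cases Y with
    | nil => simp [ED_nil']
    | cons y ys =>
      have h := ih ys
      have h2 : ED (x :: xs) (y :: ys) ≤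
          Levenshtein.defaultCost.substitute x y + ED xs ys := by
        rw [ED, levenshtein_cons_cons]
        exact le_trans (min_le_right _ _) (min_le_right _ _)
      have hs : Levenshtein.defaultCost.substitute x y ≤ 1 := by
        simp [Levenshtein.defaultCost]; split <;> omega
      simp only [List.length_cons]
      omega

lemma ED_cons_right_le (X : List α) (y : α) (Z : List α) :
    ED X (y :: Z) ≤ 1 + ED X Z := by
  cases X with
  | nil => rw [ED_nil, ED_nil]; simp
  | cons x xs =>
    rw [ED, levenshtein_cons_cons]
    exact le_trans (min_le_right _ _) (min_le_left _ _)

lemma ED_cons_left_le (x : α) (Z Y : List α) :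
    ED (x :: Z) Y ≤ 1 + ED Z Y := by
  cases Y with
  | nil => rw [ED_nil', ED_nil']; simp
  | cons y ys =>
    rw [ED, levenshtein_cons_cons]
    exact min_le_left _ _

theorem ED_append_le {α : Type*} [DecidableEq α] :
    ∀ (A C B D : List α), ED (A ++ B) (C ++ D) ≤ ED A C + ED B D
  | [], [], B, D => by simp [ED]
  | [], c :: C', B, D => by
    have h2 := ED_append_le ([] : List α) C' B D
    simp only [List.nil_append] at h2
    calc ED (([] : List α) ++ B) ((c :: C') ++ D) = ED B (c :: (C' ++ D)) := by
          simp
      _ ≤ 1 + ED B (C' ++ D) := ED_cons_right_le _ _ _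
      _ ≤ 1 + (ED ([] : List α) C' + ED B D) := by omega
      _ = ED ([] : List α) (c :: C') + ED B D := by
          rw [ED_nil, ED_nil]; simp [List.length_cons]; omega
  | a :: A', [], B, D => by
    have h2 := ED_append_le A' ([] : List α) B D
    simp only [List.nil_append] at h2
    calc ED ((a :: A') ++ B) (([] : List α) ++ D) = ED (a :: (A' ++ B)) D := by
          simp
      _ ≤ 1 + ED (A' ++ B) D := ED_cons_left_le _ _ _
      _ ≤ 1 + (ED A' ([] : List α) + ED B D) := by omega
      _ = ED (a :: A') ([] : List α) + ED B D := by
          rw [ED_nil', ED_nil']; simp [List.length_cons]; omega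
  | a :: A', c :: C', B, D => by
    have hd := ED_append_le A' (c :: C') B D
    have hi := ED_append_le (a :: A') C' B D
    have hs := ED_append_le A' C' B D
    show levenshtein Levenshtein.defaultCost ((a :: A') ++ B) ((c :: C') ++ D) ≤ _
    rw [List.cons_append, List.cons_append, levenshtein_cons_cons]
    conv_rhs => rw [ED, levenshtein_cons_cons]
    simp only [ED, List.cons_append, List.nil_append, defaultCost_delete,
      defaultCost_insert] at hd hi hs ⊢
    omega
  termination_by A C _ _ => A.length + C.length

lemma blk_split (X : List α) (p i : ℕ) :
    blk X (p + 1) i = blk X p (2 * i) ++ blk X p (2 * i + 1) := by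
  have h1 : i * 2 ^ (p + 1) = 2 * i * 2 ^ p := by ring
  have h2 : (2 : ℕ) ^ (p + 1) = 2 ^ p + 2 ^ p := by ring
  rw [blk, h1, h2, List.take_add, List.drop_drop, blk, blk]
  congr 2
  ring

lemma blk_pow_le (X : List α) (p i : ℕ) : (blk X p i).length ≤ 2 ^ p :=
  List.length_take_le _ _

lemma blk_empty {n : ℕ} (X : List α) (hX : X.length = n) {p j : ℕ}
    (h : nblocks n p ≤ j) : blk X p j = [] := by
  have hp : 0 < 2 ^ p := Nat.pow_pos (by norm_num)
  have hn : n ≤ j * 2 ^ p := by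
    by_contra hc
    push_neg at hc
    have h1 : (j + 1) * 2 ^ p ≤ n + 2 ^ p - 1 := by
      have h3 : j * 2 ^ p + 1 ≤ n := hc
      rw [add_mul, one_mul]
      omega
    have h2 : j + 1 ≤ nblocks n p := by
      rw [nblocks, Nat.le_div_iff_mul_le hp]
      exact h1
    omega
  have : X.drop (j * 2 ^ p) = [] := List.drop_eq_nil_of_le (by omega)
  rw [blk, this, List.take_nil]

/-- ED of any level-p block pair is at most 2^p. -/
lemma ED_blk_le (X Y : List α) (p i : ℕ) :
    ED (blk X p i) (blk Y p i) ≤ 2 ^ p := by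
  refine le_trans (ED_le_max _ _) ?_
  exact max_le (blk_pow_le _ _ _) (blk_pow_le _ _ _)

/-- Levels below clog 2 τ have no heavy blocks. -/
lemma Bset_eq_empty (X Y : List α) (n τ : ℕ) {p : ℕ} (hp : p < Nat.clog 2 τ) :
    Bset X Y n τ p = ∅ := by
  rw [Finset.eq_empty_iff_forall_notMem]
  intro i hi
  rw [Bset, Finset.mem_filter] at hi
  have h1 : (2 : ℕ) ^ p < τ := (Nat.lt_clog_iff_pow_lt one_lt_two).1 hp
  have h2 := ED_blk_le X Y p i
  omega

lemma pow_clog_le (τ : ℕ) (hτ : 1 ≤ τ) : 2 ^ Nat.clog 2 τ ≤ 2 * τ := by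
  rcases eq_or_lt_of_le hτ with h | h
  · rw [← h]; simp [Nat.clog_one_right]
  · have h0 : 0 < Nat.clog 2 τ := Nat.clog_pos one_lt_two h
    have h1 : 2 ^ (Nat.clog 2 τ - 1) < τ := Nat.pow_pred_clog_lt_self one_lt_two h
    have h2 : 2 ^ Nat.clog 2 τ = 2 * 2 ^ (Nat.clog 2 τ - 1) := by
      rw [← pow_succ']
      congr 1
      omega
    omega

end helpers

/-- For every level p, the total edit distance of the high-cost blocks at level p
is at most 2τ times the total number of high-cost blocks at levels ⌈log₂ τ⌉,…,p. -/
theorem stmt_4 {α : Type*} [DecidableEq α] (n τ : ℕ) (X Y : List α)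
    (hX : X.length = n) (hY : Y.length = n) (hτ : 1 ≤ τ) (p : ℕ) :
    ∑ i ∈ Bset X Y n τ p, ED (blk X p i) (blk Y p i) ≤
      2 * τ * ∑ q ∈ Finset.Icc (Nat.clog 2 τ) p, (Bset X Y n τ q).card := by
  set p0 := Nat.clog 2 τ with hp0
  -- bound used in "base" levels p ≤ p0
  have base : ∀ p ≤ p0, ∑ i ∈ Bset X Y n τ p, ED (blk X p i) (blk Y p i) ≤
      2 * τ * (Bset X Y n τ p).card := by
    intro p hp
    calc ∑ i ∈ Bset X Y n τ p, ED (blk X p i) (blk Y p i)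
        ≤ ∑ _i ∈ Bset X Y n τ p, 2 * τ := by
          refine Finset.sum_le_sum fun i _ => ?_
          refine le_trans (ED_blk_le X Y p i) ?_
          calc (2:ℕ) ^ p ≤ 2 ^ p0 := Nat.pow_le_pow_right (by norm_num) hp
            _ ≤ 2 * τ := pow_clog_le τ hτ
      _ = 2 * τ * (Bset X Y n τ p).card := by
          rw [Finset.sum_const, smul_eq_mul, mul_comm]
  induction p with
  | zero =>
    rcases Nat.eq_zero_or_pos p0 with h0 | h0
    · rw [h0, Finset.Icc_self, Finset.sum_singleton]
      exact base 0 (Nat.zero_le _)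
    · rw [Bset_eq_empty X Y n τ h0]
      simp
  | succ p ih =>
    rcases lt_trichotomy (p + 1) p0 with hlt | heq | hgt
    · rw [Bset_eq_empty X Y n τ hlt]
      simp
    · rw [← heq, Finset.Icc_self, Finset.sum_singleton]
      exact base (p + 1) heq.le
    · -- inductive step: p0 ≤ p
      have hp0p : p0 ≤ p := Nat.lt_succ_iff.mp hgt
      set S := Bset X Y n τ (p + 1) with hS
      set B := Bset X Y n τ p with hB
      set e : ℕ → ℕ := fun j => ED (blk X p j) (blk Y p j) with he
      set g : ℕ → ℕ := fun j => if j ∈ B then e j else 0 with hg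
      -- step 1: split each level-(p+1) block into two level-p blocks
      have key : ∀ i ∈ S, ED (blk X (p+1) i) (blk Y (p+1) i) ≤ e (2*i) + e (2*i+1) := by
        intro i _
        rw [blk_split X p i, blk_split Y p i]
        exact ED_append_le _ _ _ _
      -- step 2: for every j, e j ≤ g j + τ
      have hgj : ∀ j, e j ≤ g j + τ := by
        intro j
        by_cases hj : j ∈ B
        · simp [hg, hj]
        · have hle : e j ≤ τ := by
            by_cases hr : j < nblocks n p
            · rw [hB, Bset, Finset.mem_filter] at hj
              push_neg at hj
              exact hj (Finset.mem_range.mpr hr)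
            · push_neg at hr
              rw [he]
              simp only
              rw [blk_empty X hX hr, blk_empty Y hY hr, ED_nil]
              simp
          simp [hg, hj]
          omega
      -- step 3: the even and odd images
      have hsum_img : ∀ (f : ℕ → ℕ) (c : ℕ), Function.Injective f →
          ∑ i ∈ S, g (f i) = ∑ j ∈ S.image f, g j := by
        intro f c hf
        rw [Finset.sum_image (fun a _ b _ h => hf h)]
      have hdisj : Disjoint (S.image fun i => 2*i) (S.image fun i => 2*i+1) := by
        rw [Finset.disjoint_left]
        intro a ha hb
        rcases Finset.mem_image.mp ha with ⟨x, _, hx⟩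
        rcases Finset.mem_image.mp hb with ⟨y, _, hy⟩
        omega
      have hunion_le : ∑ j ∈ (S.image fun i => 2*i) ∪ (S.image fun i => 2*i+1), g j
          ≤ ∑ j ∈ B, e j := by
        calc ∑ j ∈ (S.image fun i => 2*i) ∪ (S.image fun i => 2*i+1), g j
            = ∑ j ∈ ((S.image fun i => 2*i) ∪ (S.image fun i => 2*i+1)).filter
                (fun j => j ∈ B), e j := by
              rw [Finset.sum_filter]
          _ ≤ ∑ j ∈ B, e j := by
              refine Finset.sum_le_sum_of_subset ?_
              intro j hjmem
              exact (Finset.mem_filter.mp hjmem).2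
      -- assemble
      have main : ∑ i ∈ S, ED (blk X (p+1) i) (blk Y (p+1) i)
          ≤ (∑ j ∈ B, e j) + 2 * τ * S.card := by
        calc ∑ i ∈ S, ED (blk X (p+1) i) (blk Y (p+1) i)
            ≤ ∑ i ∈ S, (e (2*i) + e (2*i+1)) := Finset.sum_le_sum key
          _ ≤ ∑ i ∈ S, ((g (2*i) + τ) + (g (2*i+1) + τ)) := by
              refine Finset.sum_le_sum fun i _ => ?_
              have := hgj (2*i); have := hgj (2*i+1); omega
          _ = (∑ i ∈ S, g (2*i)) + (∑ i ∈ S, g (2*i+1)) + 2 * τ * S.card := by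
              simp only [Finset.sum_add_distrib, Finset.sum_const, smul_eq_mul]
              ring
          _ = (∑ j ∈ S.image (fun i => 2*i), g j) +
                (∑ j ∈ S.image (fun i => 2*i+1), g j) + 2 * τ * S.card := by
              have hinj1 : Function.Injective (fun i : ℕ => 2*i) := fun a b h => by
                simp only [] at h; omega
              have hinj2 : Function.Injective (fun i : ℕ => 2*i+1) := fun a b h => by
                simp only [] at h; omega
              rw [hsum_img (fun i => 2*i) 0 hinj1, hsum_img (fun i => 2*i+1) 0 hinj2]
          _ = (∑ j ∈ (S.image fun i => 2*i) ∪ (S.image fun i => 2*i+1), g j)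
                + 2 * τ * S.card := by
              rw [Finset.sum_union hdisj]
          _ ≤ (∑ j ∈ B, e j) + 2 * τ * S.card := by omega
      -- combine with induction hypothesis
      have hIcc : ∑ q ∈ Finset.Icc p0 (p+1), (Bset X Y n τ q).card
          = (∑ q ∈ Finset.Icc p0 p, (Bset X Y n τ q).card) + S.card := by
        have hins : Finset.Icc p0 (p+1) = insert (p+1) (Finset.Icc p0 p) := by
          ext x
          simp only [Finset.mem_Icc, Finset.mem_insert]
          omega
        rw [hins, Finset.sum_insert (by simp [Finset.mem_Icc])]
        rw [hS]
        omega
      rw [hIcc]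
      have ih' : (∑ j ∈ B, e j) ≤ 2 * τ * ∑ q ∈ Finset.Icc p0 p, (Bset X Y n τ q).card := ih
      calc ∑ i ∈ S, ED (blk X (p+1) i) (blk Y (p+1) i)
          ≤ (∑ j ∈ B, e j) + 2 * τ * S.card := main
        _ ≤ 2 * τ * (∑ q ∈ Finset.Icc p0 p, (Bset X Y n τ q).card) + 2 * τ * S.card := by
            omega
        _ = 2 * τ * ((∑ q ∈ Finset.Icc p0 p, (Bset X Y n τ q).card) + S.card) := by ring
end

section
/- Let X, Y be strings of length n with ED(X,Y) ≤ β for some β ≥ 1, and define, for each level p ∈ [1, ⌈log₂ n⌉], G_p = {i ∈ [0, m_p) : ED_β(X_{p,i}, Y_{p,i}) > ψ} for an integer ψ ≥ 0. Then Σ_{p=1}^{⌈log₂ n⌉} |G_p| ≤ 2β⌈log₂ n⌉/(ψ+1). -/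
/-- The β-shifted edit distance: the minimum over shifts Δ ∈ [0, min(|U|,|V|,β)] of
the edit distance after removing Δ characters from one end of each string. -/
def EDs {α : Type*} [DecidableEq α] (β : ℕ) (U V : List α) : ℕ :=
  (Finset.range (min (min U.length V.length) β + 1)).inf' Finset.nonempty_range_add_one
    fun Δ => min (ED (U.drop Δ) (V.take (V.length - Δ)))
                 (ED (U.take (U.length - Δ)) (V.drop Δ))

/-- The set G_p of indices of block pairs with β-shifted edit distance exceeding ψ. -/
def Gset {α : Type*} [DecidableEq α] (X Y : List α) (n β ψ p : ℕ) : Finset ℕ :=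
  (Finset.range (nblocks n p)).filter fun i => ψ < EDs β (blk X p i) (blk Y p i)

namespace EDAux
variable {α : Type*} [DecidableEq α]

@[simp] lemma levenshtein_nil_nil {β δ : Type*} [AddZeroClass δ] [Min δ]
    (C : Levenshtein.Cost α β δ) : levenshtein C [] [] = 0 := by rw [levenshtein]

@[simp] lemma levenshtein_nil_cons {β δ : Type*} [AddZeroClass δ] [Min δ]
    (C : Levenshtein.Cost α β δ) (y : β) (ys : List β) :
    levenshtein C [] (y :: ys) = C.insert y + levenshtein C [] ys := by rw [levenshtein]

@[simp] lemma levenshtein_cons_nil {β δ : Type*} [AddZeroClass δ] [Min δ]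
    (C : Levenshtein.Cost α β δ) (x : α) (xs : List α) :
    levenshtein C (x :: xs) [] = C.delete x + levenshtein C xs [] := by rw [levenshtein]

@[simp] lemma levenshtein_cons_cons {β δ : Type*} [AddZeroClass δ] [Min δ]
    (C : Levenshtein.Cost α β δ) (x : α) (xs : List α) (y : β) (ys : List β) :
    levenshtein C (x :: xs) (y :: ys) =
      min (C.delete x + levenshtein C xs (y :: ys))
        (min (C.insert y + levenshtein C (x :: xs) ys) (C.substitute x y + levenshtein C xs ys)) := by
  rw [levenshtein]

@[simp] lemma defaultCost_delete (a : α) : (Levenshtein.defaultCost (α := α)).delete a = 1 := rfl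

@[simp] lemma defaultCost_insert (a : α) : (Levenshtein.defaultCost (α := α)).insert a = 1 := rfl

@[simp] lemma defaultCost_substitute (a b : α) :
    (Levenshtein.defaultCost (α := α)).substitute a b = if a = b then 0 else 1 := rfl

lemma ED_nil_right (A : List α) : ED A [] = A.length := by
  induction A with
  | nil => simp [ED]
  | cons a A ih => simp only [ED, levenshtein_cons_nil] at ih ⊢; simp [ih]; omega

lemma ED_nil_left (B : List α) : ED ([] : List α) B = B.length := by
  induction B with
  | nil => simp [ED]
  | cons b B ih => simp only [ED, levenshtein_nil_cons] at ih ⊢; simp [ih]; omega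

lemma ED_cons_cons (a b : α) (A B : List α) :
    ED (a::A) (b::B) =
      min (1 + ED A (b::B)) (min (1 + ED (a::A) B) ((if a = b then 0 else 1) + ED A B)) := by
  simp [ED, Levenshtein.defaultCost]

lemma ED_le_del (a : α) (A B : List α) : ED (a::A) B ≤ 1 + ED A B := by
  cases B with
  | nil => simp [ED_nil_right]
  | cons b B => rw [ED_cons_cons]; omega

lemma ED_le_ins (b : α) (A B : List α) : ED A (b::B) ≤ 1 + ED A B := by
  cases A with
  | nil => simp [ED_nil_left]
  | cons a A => rw [ED_cons_cons]; omega

lemma ED_le_sub (a b : α) (A B : List α) :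
    ED (a::A) (b::B) ≤ (if a = b then 0 else 1) + ED A B := by
  rw [ED_cons_cons]; omega

lemma ED_cases (a b : α) (A B : List α) :
    ED (a::A) (b::B) = 1 + ED A (b::B) ∨ ED (a::A) (b::B) = 1 + ED (a::A) B ∨
    ED (a::A) (b::B) = (if a = b then 0 else 1) + ED A B := by
  rw [ED_cons_cons]; omega

/-- length lower bounds -/
lemma ED_length : ∀ (N : ℕ) (A B : List α), A.length + B.length ≤ N →
    A.length ≤ ED A B + B.length ∧ B.length ≤ ED A B + A.length := by
  intro N
  induction N with
  | zero =>
    intro A B h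
    have : A = [] ∧ B = [] := by
      constructor <;> [skip; skip] <;> cases A <;> cases B <;> simp_all
    simp [this.1, this.2, ED]
  | succ N ih =>
    intro A B h
    match A, B with
    | [], B => simp [ED_nil_left]
    | A, [] => simp [ED_nil_right]
    | a::A, b::B =>
      have h1 := ih A (b::B) (by simp at h ⊢; omega)
      have h2 := ih (a::A) B (by simp at h ⊢; omega)
      have h3 := ih A B (by simp at h ⊢; omega)
      rcases ED_cases a b A B with hc | hc | hc <;>
        simp only [List.length_cons] at * <;> [omega; omega; skip]
      split at hc <;> omega

lemma ED_length_lb (A B : List α) :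
    A.length ≤ ED A B + B.length ∧ B.length ≤ ED A B + A.length :=
  ED_length (A.length + B.length) A B le_rfl

/-- removing head of right argument -/
lemma ED_unins : ∀ (N : ℕ) (A B : List α) (b : α), A.length + B.length ≤ N →
    ED A B ≤ 1 + ED A (b::B) := by
  intro N
  induction N with
  | zero =>
    intro A B b h
    have hA : A = [] := by cases A <;> simp_all
    have hB : B = [] := by cases B <;> simp_all
    simp [hA, hB, ED_nil_left, ED]
  | succ N ih =>
    intro A B b h
    match A with
    | [] => simp [ED_nil_left]; omega
    | a::A =>
      rcases ED_cases a b A B with hc | hc | hc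
      · have h1 : ED A B ≤ 1 + ED A (b::B) := ih A B b (by simp at h ⊢; omega)
        have h2 := ED_le_del a A B
        omega
      · omega
      · have h2 := ED_le_del a A B
        split at hc <;> omega

lemma ED_unins' (A B : List α) (b : α) : ED A B ≤ 1 + ED A (b::B) :=
  ED_unins (A.length + B.length) A B b le_rfl

lemma ED_append1 : ∀ (N : ℕ) (A B : List α) (b : α), A.length + B.length ≤ N →
    ED A (B ++ [b]) ≤ 1 + ED A B := by
  intro N
  induction N with
  | zero =>
    intro A B b h
    have hA : A = [] := by cases A <;> simp_all
    have hB : B = [] := by cases B <;> simp_all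
    simp [hA, hB, ED_nil_left]
  | succ N ih =>
    intro A B b h
    match A, B with
    | [], B => simp [ED_nil_left]
    | a::A, [] =>
      have h1 := ED_le_sub a b A []
      have h2 := (ED_length_lb A ([] : List α)).1
      simp [ED_nil_right] at *
      split at h1 <;> omega
    | a::A, b'::B =>
      have h1 : ED A (b'::B ++ [b]) ≤ 1 + ED A (b'::B) := ih A (b'::B) b (by simp at h ⊢; omega)
      have h2 : ED (a::A) (B ++ [b]) ≤ 1 + ED (a::A) B := ih (a::A) B b (by simp at h ⊢; omega)
      have h3 : ED A (B ++ [b]) ≤ 1 + ED A B := ih A B b (by simp at h ⊢; omega)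
      have e1 : ED (a::A) (b'::B ++ [b]) ≤ 1 + ED A (b'::B ++ [b]) := ED_le_del a A _
      have e2 : ED (a::A) (b'::(B ++ [b])) ≤ 1 + ED (a::A) (B ++ [b]) := ED_le_ins b' (a::A) _
      have e3 : ED (a::A) (b'::(B ++ [b])) ≤ (if a = b' then 0 else 1) + ED A (B ++ [b]) :=
        ED_le_sub a b' A _
      rcases ED_cases a b' A B with hc | hc | hc <;>
        simp only [List.cons_append] at * <;> split_ifs at * <;> omega

lemma ED_unappend1 : ∀ (N : ℕ) (A B : List α) (b : α), A.length + B.length ≤ N →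
    ED A B ≤ 1 + ED A (B ++ [b]) := by
  intro N
  induction N with
  | zero =>
    intro A B b h
    have hA : A = [] := by cases A <;> simp_all
    have hB : B = [] := by cases B <;> simp_all
    simp [hA, hB, ED_nil_left]
  | succ N ih =>
    intro A B b h
    match A, B with
    | [], B => simp [ED_nil_left]; omega
    | a::A, [] =>
      have := (ED_length_lb (a::A) [b]).1
      simp [ED_nil_right, List.length] at *
      omega
    | a::A, b'::B =>
      have h1 : ED A (b'::B) ≤ 1 + ED A (b'::B ++ [b]) := ih A (b'::B) b (by simp at h ⊢; omega)
      have h2 : ED (a::A) B ≤ 1 + ED (a::A) (B ++ [b]) := ih (a::A) B b (by simp at h ⊢; omega)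
      have h3 : ED A B ≤ 1 + ED A (B ++ [b]) := ih A B b (by simp at h ⊢; omega)
      have e1 : ED (a::A) (b'::B) ≤ 1 + ED A (b'::B) := ED_le_del a A _
      have e2 : ED (a::A) (b'::B) ≤ 1 + ED (a::A) B := ED_le_ins b' (a::A) B
      have e3 : ED (a::A) (b'::B) ≤ (if a = b' then 0 else 1) + ED A B := ED_le_sub a b' A B
      rcases ED_cases a b' A (B ++ [b]) with hc | hc | hc <;>
        simp only [List.cons_append] at * <;> split_ifs at * <;> omega

/-- appending a list on the right argument -/
lemma ED_append_le (A B C : List α) : ED A (B ++ C) ≤ ED A B + C.length := by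
  induction C generalizing B with
  | nil => simp
  | cons c C ih =>
    have h1 : ED A ((B ++ [c]) ++ C) ≤ ED A (B ++ [c]) + C.length := ih (B ++ [c])
    have h2 := ED_append1 (A.length + B.length) A B c le_rfl
    simp only [List.append_assoc, List.singleton_append, List.length_cons] at *
    omega

lemma ED_le_append (A B C : List α) : ED A B ≤ ED A (B ++ C) + C.length := by
  induction C generalizing B with
  | nil => simp
  | cons c C ih =>
    have h1 : ED A (B ++ [c]) ≤ ED A ((B ++ [c]) ++ C) + C.length := ih (B ++ [c])
    have h2 := ED_unappend1 (A.length + B.length) A B c le_rfl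
    simp only [List.append_assoc, List.singleton_append, List.length_cons] at *
    omega

lemma ED_prepend_le (A C B : List α) : ED A (C ++ B) ≤ C.length + ED A B := by
  induction C with
  | nil => simp
  | cons c C ih =>
    have := ED_le_ins c A (C ++ B)
    simp only [List.cons_append, List.length_cons] at *
    omega

lemma ED_le_prepend (A C B : List α) : ED A B ≤ C.length + ED A (C ++ B) := by
  induction C with
  | nil => simp
  | cons c C ih =>
    have := ED_unins' A (C ++ B) c
    simp only [List.cons_append, List.length_cons] at *
    omega

/-- the splitting lemma -/
lemma ED_split : ∀ (N : ℕ) (A B : List α), A.length + B.length ≤ N → ∀ s : ℕ, ∃ j, j ≤ B.length ∧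
    ED (A.take s) (B.take j) + ED (A.drop s) (B.drop j) ≤ ED A B := by
  intro N
  induction N with
  | zero =>
    intro A B h s
    have hA : A = [] := by cases A <;> simp_all
    have hB : B = [] := by cases B <;> simp_all
    exact ⟨0, by simp [hA, hB, ED_nil_left]⟩
  | succ N ih =>
    intro A B h s
    match A, s with
    | [], s => exact ⟨0, by simp [ED_nil_left], by simp [ED_nil_left]⟩
    | a::A, 0 => exact ⟨0, by simp, by simp [ED_nil_left]⟩
    | a::A, s+1 =>
      match B with
      | [] =>
        refine ⟨0, le_rfl, ?_⟩
        simp [ED_nil_right, List.length_take, List.length_drop]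
        omega
      | b::B =>
        rcases ED_cases a b A B with hc | hc | hc
        · obtain ⟨j, hj, hs⟩ := ih A (b::B) (by simp at h ⊢; omega) s
          refine ⟨j, hj, ?_⟩
          have e1 : ED (a :: A.take s) ((b::B).take j) ≤ 1 + ED (A.take s) ((b::B).take j) :=
            ED_le_del _ _ _
          simp only [List.take_succ_cons, List.drop_succ_cons] at *
          omega
        · obtain ⟨j, hj, hs⟩ := ih (a::A) B (by simp at h ⊢; omega) (s+1)
          refine ⟨j+1, by simpa using hj, ?_⟩
          have e1 : ED ((a::A).take (s+1)) (b :: B.take j) ≤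
              1 + ED ((a::A).take (s+1)) (B.take j) := ED_le_ins _ _ _
          simp only [List.take_succ_cons, List.drop_succ_cons] at *
          omega
        · obtain ⟨j, hj, hs⟩ := ih A B (by simp at h ⊢; omega) s
          refine ⟨j+1, by simpa using hj, ?_⟩
          have e1 : ED (a :: A.take s) (b :: B.take j) ≤
              (if a = b then 0 else 1) + ED (A.take s) (B.take j) := ED_le_sub _ _ _ _
          simp only [List.take_succ_cons, List.drop_succ_cons] at *
          split_ifs at * <;> omega

lemma ED_split' (A B : List α) (s : ℕ) : ∃ j, j ≤ B.length ∧
    ED (A.take s) (B.take j) + ED (A.drop s) (B.drop j) ≤ ED A B :=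
  ED_split (A.length + B.length) A B le_rfl s

/-- adjusting the length of a `take` on the right argument -/
lemma ED_take_adjust (Z l : List α) (v w : ℕ) (hv : v ≤ l.length) :
    ED Z (l.take v) ≤ ED Z (l.take w) + (v - w) + (w - v) := by
  rcases le_total v w with hvw | hvw
  · -- l.take v is a prefix of l.take w : take w = take v ++ C, |C| = min w |l| - v
    have hid : l.take w = l.take v ++ (l.drop v).take (w - v) := by
      rw [← List.take_add]; congr 1; omega
    have := ED_le_append Z (l.take v) ((l.drop v).take (w - v))
    rw [← hid] at this
    have hlen : ((l.drop v).take (w - v)).length ≤ w - v := by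
      simp [List.length_take, List.length_drop]
    omega
  · have hid : l.take v = l.take w ++ (l.drop w).take (v - w) := by
      rw [← List.take_add]; congr 1; omega
    have := ED_append_le Z (l.take w) ((l.drop w).take (v - w))
    rw [← hid] at this
    have hlen : ((l.drop w).take (v - w)).length ≤ v - w := by
      simp [List.length_take, List.length_drop]
    omega

/-- adjusting the start of an interval, keeping the absolute end fixed -/
lemma ED_front_adjust (Z Y : List α) (x x' E : ℕ) (hx : x ≤ E) (hx' : x' ≤ E)
    (hE : E ≤ Y.length) :
    ED Z ((Y.drop x).take (E - x)) ≤ ED Z ((Y.drop x').take (E - x')) + (x - x') + (x' - x) := by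
  have key : ∀ u u' : ℕ, u ≤ u' → u' ≤ E → E ≤ Y.length →
      ED Z ((Y.drop u).take (E - u)) ≤ ED Z ((Y.drop u').take (E - u')) + (u' - u) ∧
      ED Z ((Y.drop u').take (E - u')) ≤ ED Z ((Y.drop u).take (E - u)) + (u' - u) := by
    intro u u' huu hu'E hEY
    have hd : Y.drop u' = (Y.drop u).drop (u' - u) := by
      rw [List.drop_drop]; congr 1; omega
    have hid : (Y.drop u).take (E - u) =
        ((Y.drop u).take (u' - u)) ++ ((Y.drop u').take (E - u')) := by
      rw [hd, ← List.take_add]; congr 1; omega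
    have hlen : ((Y.drop u).take (u' - u)).length = u' - u := by
      simp [List.length_take, List.length_drop]; omega
    constructor
    · have := ED_prepend_le Z ((Y.drop u).take (u' - u)) ((Y.drop u').take (E - u'))
      rw [← hid] at this; omega
    · have := ED_le_prepend Z ((Y.drop u).take (u' - u)) ((Y.drop u').take (E - u'))
      rw [← hid] at this; omega
  rcases le_total x x' with hxx | hxx
  · have := (key x x' hxx hx' hE).1; omega
  · have := (key x' x hxx hx hE).2; omega

/-- general interval adjustment -/
lemma ED_interval (Z Y : List α) (x u x' u' : ℕ) (h : x + u ≤ Y.length)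
    (h' : x' + u' ≤ Y.length) :
    ED Z ((Y.drop x).take u) ≤ ED Z ((Y.drop x').take u')
      + ((x - x') + (x' - x)) + ((x + u) - (x' + u') + ((x' + u') - (x + u))) := by
  by_cases hcase : x' ≤ x + u
  · -- first adjust the end from x'+u' to E := x+u (with start x'), then the front
    have step1 : ED Z ((Y.drop x').take (x + u - x')) ≤
        ED Z ((Y.drop x').take u') + ((x + u - x') - u') + (u' - (x + u - x')) :=
      ED_take_adjust Z (Y.drop x') _ u' (by simp [List.length_drop]; omega)
    have step2 : ED Z ((Y.drop x).take ((x+u) - x)) ≤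
        ED Z ((Y.drop x').take ((x+u) - x')) + (x - x') + (x' - x) :=
      ED_front_adjust Z Y x x' (x+u) (by omega) hcase h
    have hxu : (x + u) - x = u := by omega
    rw [hxu] at step2
    omega
  · -- disjoint: go through the empty list
    have e1 : ED Z ((Y.drop x).take u) ≤ ED Z [] + u := by
      have := ED_prepend_le Z ((Y.drop x).take u) []
      have hlen : ((Y.drop x).take u).length ≤ u := by simp [List.length_take]
      simp only [List.append_nil] at this; omega
    have e2 : ED Z [] ≤ ED Z ((Y.drop x').take u') + u' := by
      have := ED_le_prepend Z ((Y.drop x').take u') []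
      have hlen : ((Y.drop x').take u').length = u' := by
        simp [List.length_take, List.length_drop]; omega
      simp only [List.append_nil] at this; omega
    omega

lemma EDs_le_branch1 (β Δ : ℕ) (U V : List α) (h : Δ ≤ min (min U.length V.length) β) :
    EDs β U V ≤ ED (U.drop Δ) (V.take (V.length - Δ)) :=
  le_trans (Finset.inf'_le _ (by simp only [Finset.mem_range]; omega)) (min_le_left _ _)

lemma EDs_le_branch2 (β Δ : ℕ) (U V : List α) (h : Δ ≤ min (min U.length V.length) β) :
    EDs β U V ≤ ED (U.take (U.length - Δ)) (V.drop Δ) :=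
  le_trans (Finset.inf'_le _ (by simp only [Finset.mem_range]; omega)) (min_le_right _ _)

/-- The key per-block bound. -/
lemma block_bound (Y U A : List α) (β a e b L : ℕ)
    (hU : U.length = L) (hbL : b + L ≤ Y.length) (hae : a ≤ e) (he : e ≤ Y.length)
    (hA : A = (Y.drop a).take (e - a))
    (hab : a ≤ b + β) (hba : b ≤ a + β) :
    EDs β U ((Y.drop b).take L) ≤ ED U A + ((e - a) - L) + (L - (e - a)) := by
  set V := (Y.drop b).take L with hVdef
  have hV : V.length = L := by simp [hVdef, List.length_take, List.length_drop]; omega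
  have hAlen : A.length = e - a := by
    simp [hA, List.length_take, List.length_drop]; omega
  rcases le_or_gt b a with hcase | hcase
  · -- δ := a - b ≥ 0
    rcases le_or_gt L (a - b) with hL | hL
    · -- degenerate : full shift
      have h0 : EDs β U V ≤ ED (U.take (U.length - L)) (V.drop L) :=
        EDs_le_branch2 β L U V (by omega)
      have h1 : U.take (U.length - L) = [] := by
        rw [hU]; simp
      have h2 : V.drop L = [] := by
        apply List.drop_eq_nil_of_le; omega
      rw [h1, h2] at h0
      simp [ED] at h0; omega
    · set δ := a - b with hδ
      have h0 : EDs β U V ≤ ED (U.take (U.length - δ)) (V.drop δ) :=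
        EDs_le_branch2 β δ U V (by omega)
      have hVd : V.drop δ = (Y.drop a).take (L - δ) := by
        rw [hVdef, List.drop_take, List.drop_drop]
        congr 2 <;> omega
      obtain ⟨j, hj, hsplit⟩ := ED_split' U A (L - δ)
      rw [hAlen] at hj
      have hAj : A.take j = (Y.drop a).take j := by
        rw [hA, List.take_take]; congr 1; omega
      -- adjust the take length from j to L - δ
      have hadj : ED (U.take (U.length - δ)) ((Y.drop a).take (L - δ)) ≤
          ED (U.take (U.length - δ)) ((Y.drop a).take j) + ((L - δ) - j) + (j - (L - δ)) :=
        ED_take_adjust _ _ _ _ (by simp [List.length_drop]; omega)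
      rw [← hAj] at hadj
      -- length bound for the second split piece
      have hlb := ED_length_lb (U.drop (L - δ)) (A.drop j)
      have hl1 : (U.drop (L - δ)).length = δ := by simp [List.length_drop]; omega
      have hl2 : (A.drop j).length = (e - a) - j := by simp [List.length_drop]; omega
      rw [hl1, hl2] at hlb
      have hsU : U.length - δ = L - δ := by omega
      rw [hsU] at h0 hadj
      rw [hVd] at h0
      omega
  · -- δ' := b - a > 0
    rcases le_or_gt L (b - a) with hL | hL
    · have h0 : EDs β U V ≤ ED (U.drop L) (V.take (V.length - L)) :=
        EDs_le_branch1 β L U V (by omega)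
      have h1 : U.drop L = [] := by apply List.drop_eq_nil_of_le; omega
      have h2 : V.take (V.length - L) = [] := by rw [hV]; simp
      rw [h1, h2] at h0
      simp [ED] at h0; omega
    · set δ := b - a with hδ
      have h0 : EDs β U V ≤ ED (U.drop δ) (V.take (V.length - δ)) :=
        EDs_le_branch1 β δ U V (by omega)
      have hVt : V.take (V.length - δ) = (Y.drop b).take (L - δ) := by
        rw [hV, hVdef, List.take_take]; congr 1; omega
      obtain ⟨j, hj, hsplit⟩ := ED_split' U A δ
      rw [hAlen] at hj
      have hAj : A.drop j = (Y.drop (a + j)).take ((e - a) - j) := by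
        rw [hA, List.drop_take, List.drop_drop]
      -- interval adjustment on the second piece
      have hadj : ED (U.drop δ) ((Y.drop b).take (L - δ)) ≤
          ED (U.drop δ) ((Y.drop (a + j)).take ((e - a) - j))
            + ((b - (a+j)) + ((a+j) - b))
            + ((b + (L - δ)) - ((a+j) + ((e-a) - j)) + (((a+j) + ((e-a) - j)) - (b + (L - δ)))) :=
        ED_interval _ Y b (L - δ) (a + j) ((e - a) - j) (by omega) (by omega)
      rw [← hAj] at hadj
      -- length bound for the first split piece
      have hlb := ED_length_lb (U.take δ) (A.take j)
      have hl1 : (U.take δ).length = δ := by simp [List.length_take]; omega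
      have hl2 : (A.take j).length = j := by simp [List.length_take]; omega
      rw [hl1, hl2] at hlb
      rw [hVt] at h0
      omega

lemma multisplit : ∀ (m : ℕ), 1 ≤ m → ∀ (X Y : List α) (b : ℕ → ℕ),
    (∀ i, i < m → b i ≤ b (i+1)) → b 0 = 0 → b m = X.length →
    ∃ a : ℕ → ℕ, a 0 = 0 ∧ a m = Y.length ∧ (∀ i, i < m → a i ≤ a (i+1)) ∧
      (∀ i, i ≤ m → a i ≤ Y.length) ∧
      ∑ i ∈ Finset.range m, ED ((X.drop (b i)).take (b (i+1) - b i))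
        ((Y.drop (a i)).take (a (i+1) - a i)) ≤ ED X Y := by
  intro m hm
  induction m, hm using Nat.le_induction with
  | base =>
    intro X Y b hmono hb0 hb1
    refine ⟨fun i => if i = 0 then 0 else Y.length, by simp, by simp, ?_, ?_, ?_⟩
    · intro i hi; interval_cases i; simp
    · intro i hi; interval_cases i <;> simp
    · simp [hb0, hb1]
  | succ m hm ih =>
    intro X Y b hmono hb0 hbm
    -- global monotonicity of b
    have bmono : ∀ i j, i ≤ j → j ≤ m + 1 → b i ≤ b j := by
      intro i j hij hj
      induction j with
      | zero =>
        have : i = 0 := by omega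
        simp [this]
      | succ j ihj =>
        rcases Nat.eq_or_lt_of_le hij with rfl | hlt
        · exact le_rfl
        · exact le_trans (ihj (by omega) (by omega)) (hmono j (by omega))
    obtain ⟨j, hj, hsplit⟩ := ED_split' X Y (b 1)
    have hb1X : b 1 ≤ X.length := by
      rw [← hbm]; exact bmono 1 (m+1) (by omega) le_rfl
    obtain ⟨a', ha0, ham, hamono, habd, hsum⟩ := ih (X.drop (b 1)) (Y.drop j)
      (fun i => b (i+1) - b 1)
      (fun i hi => by
        have h1 := bmono 1 (i+1) (by omega) (by omega)
        have h2 := hmono (i+1) (by omega)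
        omega)
      (by norm_num)
      (by
        simp only [List.length_drop, hbm])
    refine ⟨fun i => if i = 0 then 0 else a' (i-1) + j, by simp, ?_, ?_, ?_, ?_⟩
    · simp only [if_neg (by omega : ¬ (m + 1 = 0)), Nat.add_sub_cancel]
      simp only [List.length_drop] at ham
      omega
    · intro i hi
      rcases Nat.eq_zero_or_pos i with rfl | hpos
      · simp
      · obtain ⟨k, rfl⟩ : ∃ k, i = k + 1 := ⟨i - 1, by omega⟩
        simp only [if_neg (by omega : ¬ k + 1 = 0), if_neg (by omega : ¬ k + 1 + 1 = 0),
          Nat.add_sub_cancel]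
        have := hamono k (by omega)
        omega
    · intro i hi
      rcases Nat.eq_zero_or_pos i with rfl | hpos
      · simp
      · obtain ⟨k, rfl⟩ : ∃ k, i = k + 1 := ⟨i - 1, by omega⟩
        simp only [if_neg (by omega : ¬ k + 1 = 0), Nat.add_sub_cancel]
        have := habd k (by omega)
        simp only [List.length_drop] at this
        omega
    · rw [Finset.sum_range_succ']
      have hterm0 : ED ((X.drop (b 0)).take (b (0+1) - b 0))
          ((Y.drop (if (0:ℕ) = 0 then 0 else a' (0-1) + j)).take
            ((if (1:ℕ) = 0 then 0 else a' (1-1) + j) - (if (0:ℕ) = 0 then 0 else a' (0-1) + j)))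
          = ED (X.take (b 1)) (Y.take j) := by
        simp [hb0, ha0]
      have hterms : ∀ i ∈ Finset.range m,
          ED ((X.drop (b (i+1))).take (b (i+1+1) - b (i+1)))
            ((Y.drop (if i+1 = 0 then 0 else a' (i+1-1) + j)).take
              ((if i+1+1 = 0 then 0 else a' (i+1+1-1) + j) - (if i+1 = 0 then 0 else a' (i+1-1) + j)))
          = ED (((X.drop (b 1)).drop (b (i+1) - b 1)).take ((b (i+1+1) - b 1) - (b (i+1) - b 1)))
            (((Y.drop j).drop (a' i)).take (a' (i+1) - a' i)) := by
        intro i hi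
        simp only [Finset.mem_range] at hi
        have h1 := bmono 1 (i+1) (by omega) (by omega)
        have h2 := bmono (i+1) (i+2) (by omega) (by omega)
        simp only [if_neg (by omega : ¬ i+1 = 0), if_neg (by omega : ¬ i+1+1 = 0),
          Nat.add_sub_cancel, List.drop_drop]
        rw [show b 1 + (b (i+1) - b 1) = b (i+1) from by omega,
          show b (i+1+1) - b 1 - (b (i+1) - b 1) = b (i+1+1) - b (i+1) from by omega,
          show a' (i+1) + j - (a' i + j) = a' (i+1) - a' i from by omega,
          Nat.add_comm j (a' i)]
      exact le_trans (add_le_add (le_of_eq_of_le (Finset.sum_congr rfl hterms) hsum)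
        (le_of_eq hterm0)) (by omega)

lemma blk_eq (X : List α) (n p i : ℕ) (hX : X.length = n) :
    blk X p i = (X.drop (min (i * 2^p) n)).take (min ((i+1) * 2^p) n - min (i * 2^p) n) := by
  have hik : (i+1) * 2^p = i * 2^p + 2^p := by rw [Nat.succ_mul]
  rcases le_or_gt (i * 2^p) n with hle | hlt
  · rw [min_eq_left hle]
    unfold blk
    rw [List.take_eq_take_iff]
    simp only [List.length_drop, hX]
    rw [hik]
    have hgoal : ∀ A B N : ℕ, A ≤ N → min B (N - A) = min (min (A + B) N - A) (N - A) := by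
      intro A B N h; omega
    exact hgoal _ _ _ hle
  · have h1 : X.drop (i * 2^p) = [] := List.drop_eq_nil_of_le (by omega)
    have h2 : X.drop (min (i * 2^p) n) = [] := List.drop_eq_nil_of_le (by omega)
    unfold blk
    rw [h1, h2]
    simp

lemma level_bound (X Y : List α) (n β p : ℕ) (hX : X.length = n) (hY : Y.length = n)
    (hn : 1 ≤ n) (hED : ED X Y ≤ β) :
    ∑ i ∈ Finset.range (nblocks n p), EDs β (blk X p i) (blk Y p i) ≤ 2 * ED X Y := by
  set k := 2^p with hk
  have kpos : 0 < k := Nat.pow_pos (by norm_num)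
  set m := nblocks n p with hm
  have hnm : n ≤ k * m := by
    have h1 := Nat.div_add_mod (n + k - 1) k
    have h2 : (n + k - 1) % k < k := Nat.mod_lt _ kpos
    have hm' : m = (n + k - 1) / k := rfl
    rw [hm']
    omega
  have hm1 : 1 ≤ m := by
    by_contra h
    have : m = 0 := by omega
    rw [this] at hnm
    omega
  set b : ℕ → ℕ := fun i => min (i * k) n with hb
  have hbmono : ∀ i, i < m → b i ≤ b (i+1) := by
    intro i _
    simp only [hb]
    have : i * k ≤ (i+1) * k := Nat.mul_le_mul_right k (by omega)
    omega
  have hbmono' : ∀ i j, i ≤ j → b i ≤ b j := by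
    intro i j hij
    simp only [hb]
    have : i * k ≤ j * k := Nat.mul_le_mul_right k hij
    omega
  have hb0 : b 0 = 0 := by simp [hb]
  have hbm : b m = X.length := by
    simp only [hb, hX]
    rw [Nat.mul_comm] at hnm
    omega
  have hbn : ∀ i, b i ≤ n := fun i => min_le_right _ _
  obtain ⟨a, ha0, ham, hamono, habd, hsum⟩ := multisplit m hm1 X Y b hbmono hb0 hbm
  rw [hY] at ham habd
  -- notation for the pieces
  set c : ℕ → ℕ := fun i => ED ((X.drop (b i)).take (b (i+1) - b i))
      ((Y.drop (a i)).take (a (i+1) - a i)) with hc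
  -- piece lengths
  have hXlen : ∀ i, i < m → ((X.drop (b i)).take (b (i+1) - b i)).length = b (i+1) - b i := by
    intro i hi
    simp only [List.length_take, List.length_drop, hX]
    have := hbmono i hi
    have := hbn (i+1)
    omega
  have hYlen : ∀ i, i < m → ((Y.drop (a i)).take (a (i+1) - a i)).length = a (i+1) - a i := by
    intro i hi
    simp only [List.length_take, List.length_drop, hY]
    have := hamono i hi
    have := habd (i+1) (by omega)
    omega
  -- partial sums control the shift
  have hshift : ∀ i, i ≤ m → a i ≤ b i + ∑ j ∈ Finset.range i, c j ∧
      b i ≤ a i + ∑ j ∈ Finset.range i, c j := by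
    intro i
    induction i with
    | zero => simp [ha0, hb0]
    | succ i ih =>
      intro hi
      have hlb := ED_length_lb ((X.drop (b i)).take (b (i+1) - b i))
        ((Y.drop (a i)).take (a (i+1) - a i))
      rw [hXlen i (by omega), hYlen i (by omega)] at hlb
      have h1 := ih (by omega)
      have h2 := hamono i (by omega)
      have h3 := hbmono i (by omega)
      rw [Finset.sum_range_succ]
      have hcc : c i = ED ((X.drop (b i)).take (b (i+1) - b i))
          ((Y.drop (a i)).take (a (i+1) - a i)) := rfl
      omega
  have hcsum : ∀ i, i ≤ m → ∑ j ∈ Finset.range i, c j ≤ β := by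
    intro i hi
    calc ∑ j ∈ Finset.range i, c j ≤ ∑ j ∈ Finset.range m, c j :=
          Finset.sum_le_sum_of_subset (Finset.range_subset_range.2 hi)
      _ ≤ ED X Y := hsum
      _ ≤ β := hED
  -- per-block bound
  have hblock : ∀ i, i < m → EDs β (blk X p i) (blk Y p i) ≤ 2 * c i := by
    intro i hi
    have hbX := blk_eq X n p i hX
    have hbY := blk_eq Y n p i hY
    have hbb : ∀ j, min (j * 2^p) n = b j := fun j => rfl
    rw [hbb, hbb] at hbX hbY
    have hs := hshift i (by omega)
    have hcb := hcsum i (by omega)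
    have key := block_bound Y (blk X p i) ((Y.drop (a i)).take (a (i+1) - a i)) β
      (a i) (a (i+1)) (b i) (b (i+1) - b i)
      (by rw [hbX]; simp only [List.length_take, List.length_drop, hX]
          have := hbmono i hi; have := hbn (i+1); omega)
      (by rw [hY]; have := hbmono i hi; have := hbn (i+1); omega)
      (hamono i hi)
      (by rw [hY]; exact habd (i+1) (by omega))
      rfl
      (by omega)
      (by omega)
    rw [← hbY, hbX] at key
    -- the dist term is bounded by c i
    have hlb := ED_length_lb ((X.drop (b i)).take (b (i+1) - b i))
      ((Y.drop (a i)).take (a (i+1) - a i))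
    rw [hXlen i hi, hYlen i hi] at hlb
    have hcc : c i = ED ((X.drop (b i)).take (b (i+1) - b i))
        ((Y.drop (a i)).take (a (i+1) - a i)) := rfl
    rw [hbX]
    omega
  calc ∑ i ∈ Finset.range m, EDs β (blk X p i) (blk Y p i)
      ≤ ∑ i ∈ Finset.range m, 2 * c i := by
        apply Finset.sum_le_sum
        intro i hi
        exact hblock i (Finset.mem_range.1 hi)
    _ = 2 * ∑ i ∈ Finset.range m, c i := by rw [Finset.mul_sum]
    _ ≤ 2 * ED X Y := by
        have hsum' : ∑ i ∈ Finset.range m, c i ≤ ED X Y := hsum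
        omega

end EDAux

/-- Claim: if ED(X,Y) ≤ β then Σ_{p=1}^{⌈log₂ n⌉} |G_p| ≤ 2β⌈log₂ n⌉/(ψ+1),
stated multiplicatively. -/
theorem stmt_6 {α : Type*} [DecidableEq α] (n β ψ : ℕ) (X Y : List α)
    (hX : X.length = n) (hY : Y.length = n) (hβ : 1 ≤ β) (hED : ED X Y ≤ β) :
    (ψ + 1) * ∑ p ∈ Finset.Icc 1 (Nat.clog 2 n), (Gset X Y n β ψ p).card ≤
      2 * β * Nat.clog 2 n := by
  rcases Nat.eq_zero_or_pos n with rfl | hn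
  · simp [Nat.clog]
  have hper : ∀ p : ℕ, (ψ + 1) * (Gset X Y n β ψ p).card ≤ 2 * β := by
    intro p
    have h1 : (Gset X Y n β ψ p).card • (ψ + 1) ≤ ∑ i ∈ Gset X Y n β ψ p,
        EDs β (blk X p i) (blk Y p i) := by
      apply Finset.card_nsmul_le_sum
      intro i hi
      have := (Finset.mem_filter.1 hi).2
      omega
    have h2 : ∑ i ∈ Gset X Y n β ψ p, EDs β (blk X p i) (blk Y p i) ≤
        ∑ i ∈ Finset.range (nblocks n p), EDs β (blk X p i) (blk Y p i) :=
      Finset.sum_le_sum_of_subset (Finset.filter_subset _ _)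
    have h3 := EDAux.level_bound X Y n β p hX hY hn hED
    rw [smul_eq_mul, mul_comm] at h1
    omega
  calc (ψ + 1) * ∑ p ∈ Finset.Icc 1 (Nat.clog 2 n), (Gset X Y n β ψ p).card
      = ∑ p ∈ Finset.Icc 1 (Nat.clog 2 n), (ψ + 1) * (Gset X Y n β ψ p).card := by
        rw [Finset.mul_sum]
    _ ≤ ∑ p ∈ Finset.Icc 1 (Nat.clog 2 n), 2 * β :=
        Finset.sum_le_sum fun p _ => hper p
    _ = 2 * β * Nat.clog 2 n := by
        rw [Finset.sum_const, Nat.card_Icc, smul_eq_mul, Nat.add_sub_cancel, Nat.mul_comm]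
end
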